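/- arXiv:2304.04813 — 2 statements merged into one kernel-verified Lean document; each statement's English description precedes it below -/
import Mathlib

section
/- Let G be a generalized Young function satisfying (H1) and (H3). For each x ∈ ℝⁿ define h₀(x,ρ) := ρ^{−1} ∫_{S^{n−1}} G(x,x,|w_n|ρ) dH^{n−1}(w) for ρ > 0 and h₀(x,0) := 0. Then for every x ∈ ℝⁿ: ρ ↦ h₀(x,ρ) is nondecreasing on [0,∞); h₀(x,ρ) → ∞ as ρ → ∞; and H₀(x,t) = ∫₀ᵗ h₀(x,ρ) dρ for every t ≥ 0. In particular, for every x, the function t ↦ H₀(x,t) is convex on [0,∞) with H₀(x,0) = 0. -/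
open MeasureTheory Real Filter Topology Metric Set

noncomputable section

/-- Euclidean space `ℝⁿ` with `n = m + 1 ≥ 1`. -/
abbrev Euc (m : ℕ) := EuclideanSpace ℝ (Fin (m + 1))

/-- The last coordinate of a point of `ℝ^{m+1}`. -/
def lastCoord {m : ℕ} (w : Euc m) : ℝ := w (Fin.last m)

/-- The volume of the unit ball of `ℝ^{m+1}`. -/
def unitBallVol (m : ℕ) : ℝ := (volume (ball (0 : Euc m) 1)).toReal

/-- The data of a generalized Young function `G(x,y,t) = ∫₀ᵗ g(x,y,s) ds`, where the
density `g` vanishes at `t = 0`, is positive for `t > 0`, is nondecreasing and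
right-continuous in `t` on `[0,∞)`, and tends to `∞` as `t → ∞`. -/
structure GenYoung (m : ℕ) where
  g : Euc m → Euc m → ℝ → ℝ
  g_nonneg : ∀ x y t, 0 ≤ t → 0 ≤ g x y t
  g_zero : ∀ x y, g x y 0 = 0
  g_pos : ∀ x y t, 0 < t → 0 < g x y t
  g_mono : ∀ x y, MonotoneOn (g x y) (Set.Ici 0)
  g_rightCont : ∀ x y t, 0 ≤ t → ContinuousWithinAt (g x y) (Set.Ici t) t
  g_top : ∀ x y, Tendsto (g x y) atTop atTop

namespace GenYoung

variable {m : ℕ}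

/-- The generalized Young function `G(x,y,t) = ∫₀ᵗ g(x,y,s) ds`. -/
def G (D : GenYoung m) (x y : Euc m) (t : ℝ) : ℝ := ∫ s in (0:ℝ)..t, D.g x y s

/-- Hypothesis (H1): `0 < C₁ ≤ G(x,y,1) ≤ C₂` uniformly in `x, y`. -/
def H1 (D : GenYoung m) (C1 C2 : ℝ) : Prop :=
  0 < C1 ∧ C1 ≤ C2 ∧ ∀ x y : Euc m, C1 ≤ D.G x y 1 ∧ D.G x y 1 ≤ C2

/-- Hypothesis (H2): `y ↦ G(x,y,t)` is continuous. -/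
def H2 (D : GenYoung m) : Prop :=
  ∀ (x : Euc m) (t : ℝ), 0 ≤ t → Continuous fun y => D.G x y t

/-- Hypothesis (H3): `p⁻ ≤ t g(x,y,t) / G(x,y,t) ≤ p⁺` with `1 < p⁻ ≤ p⁺ < ∞`. -/
def H3 (D : GenYoung m) (pm pp : ℝ) : Prop :=
  1 < pm ∧ pm ≤ pp ∧ ∀ (x y : Euc m) (t : ℝ), 0 < t →
    pm ≤ t * D.g x y t / D.G x y t ∧ t * D.g x y t / D.G x y t ≤ pp

/-- The limit function
`H₀(x,t) = ∫₀¹ ∫_{S^{n-1}} G(x,x,t |wₙ| r) dH^{n-1}(w) r⁻¹ dr`, where the sphere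
carries the `(n-1)`-dimensional Hausdorff measure. -/
def H0 (D : GenYoung m) (x : Euc m) (t : ℝ) : ℝ :=
  ∫ r in (0:ℝ)..1,
    (∫ w in sphere (0 : Euc m) 1, D.G x x (t * |lastCoord w| * r) ∂μH[(m:ℝ)]) / r

/-- The modular `𝒥_{s,G}(u) = ∬ G(x,y,|u(x)-u(y)|/|x-y|ˢ) |x-y|⁻ⁿ dx dy`. -/
def J (D : GenYoung m) (s : ℝ) (u : Euc m → ℝ) : ℝ :=
  ∫ q : Euc m × Euc m,
    D.G q.1 q.2 (|u q.1 - u q.2| / ‖q.1 - q.2‖ ^ s) / ‖q.1 - q.2‖ ^ (m + 1)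

end GenYoung

/-- The density `h₀(x,ρ) = ρ⁻¹ ∫_{S^{n-1}} G(x,x,|wₙ|ρ) dH^{n-1}(w)` for `ρ > 0`,
with `h₀(x,0) = 0`. -/
def sphDensity {m : ℕ} (D : GenYoung m) (x : Euc m) (ρ : ℝ) : ℝ :=
  if ρ = 0 then 0
  else (∫ w in sphere (0 : Euc m) 1, D.G x x (|lastCoord w| * ρ) ∂μH[(m:ℝ)]) / ρ

open Module intervalIntegral
open scoped ENNReal NNReal

set_option linter.unusedSectionVars false

variable {g : ℝ → ℝ} (hg0 : ∀ t, 0 ≤ t → 0 ≤ g t) (hgm : MonotoneOn g (Set.Ici 0))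
  (hgtop : Tendsto g atTop atTop)

def GG (g : ℝ → ℝ) (t : ℝ) : ℝ := ∫ s in (0:ℝ)..t, g s

include hgm in
lemma g_ii {a b : ℝ} (ha : 0 ≤ a) (hb : 0 ≤ b) : IntervalIntegrable g volume a b :=
  MonotoneOn.intervalIntegrable (hgm.mono (fun u hu => (le_min ha hb).trans hu.1))

include hg0 in
lemma GG_nonneg {t : ℝ} (ht : 0 ≤ t) : 0 ≤ GG g t :=
  intervalIntegral.integral_nonneg ht (fun u hu => hg0 u hu.1)

include hgm in
lemma GG_add {a b : ℝ} (ha : 0 ≤ a) (hab : a ≤ b) : GG g b = GG g a + ∫ s in a..b, g s := by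
  rw [GG, GG, intervalIntegral.integral_add_adjacent_intervals (g_ii hgm le_rfl ha) (g_ii hgm ha (ha.trans hab))]

include hg0 hgm in
lemma GG_mono : MonotoneOn (GG g) (Set.Ici 0) := by
  intro a ha b hb hab
  rw [GG_add hgm ha hab]
  have : 0 ≤ ∫ s in a..b, g s :=
    intervalIntegral.integral_nonneg hab (fun u hu => hg0 u (le_trans ha hu.1))
  linarith

include hgm in
lemma GG_le {a : ℝ} (ha : 0 ≤ a) : GG g a ≤ a * g a := by
  have : GG g a ≤ ∫ _ in (0:ℝ)..a, g a := by
    apply intervalIntegral.integral_mono_on ha (g_ii hgm le_rfl ha) intervalIntegrable_const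
    exact fun u hu => hgm hu.1 ha hu.2
  simpa using this

include hgm in
lemma GG_sub_ge {a b : ℝ} (ha : 0 ≤ a) (hab : a ≤ b) : (b - a) * g a ≤ GG g b - GG g a := by
  rw [GG_add hgm ha hab]
  have : (∫ _ in a..b, g a) ≤ ∫ s in a..b, g s := by
    apply intervalIntegral.integral_mono_on hab intervalIntegrable_const (g_ii hgm ha (ha.trans hab))
    exact fun u hu => hgm ha (ha.trans hu.1) hu.1
  simp at this
  linarith

include hg0 hgm in
lemma GG_slope {a b : ℝ} (ha : 0 < a) (hab : a ≤ b) : GG g a * b ≤ GG g b * a := by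
  have h1 := GG_le hgm ha.le
  have h2 := GG_sub_ge hgm ha.le hab
  nlinarith [hg0 a ha.le]

include hg0 hgm hgtop in
lemma GG_div_tendsto : Tendsto (fun t => GG g t / t) atTop atTop := by
  have key : ∀ t : ℝ, 0 < t → g (t/2) / 2 ≤ GG g t / t := by
    intro t ht
    have h0 : 0 ≤ GG g (t/2) := GG_nonneg hg0 (by positivity)
    have h2 := GG_sub_ge hgm (by positivity : (0:ℝ) ≤ t/2) (by linarith : t/2 ≤ t)
    have h3 : (t/2) * g (t/2) ≤ GG g t := by linarith
    calc g (t/2) / 2 = (t/2) * g (t/2) / t := by field_simp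
    _ ≤ GG g t / t := by gcongr
  have h1 : Tendsto (fun t : ℝ => g (t/2) / 2) atTop atTop :=
    (hgtop.comp (tendsto_id.atTop_div_const two_pos)).atTop_div_const two_pos
  exact tendsto_atTop_mono' _ ((eventually_gt_atTop 0).mono key) h1

include hgm in
lemma GG_contOn : ContinuousOn (GG g) (Set.Ici 0) := by
  intro t ht
  simp only [Set.mem_Ici] at ht
  have ht1 : (0:ℝ) ≤ t + 1 := by linarith
  have hint : IntegrableOn g (Icc 0 (t+1)) volume :=
    (intervalIntegrable_iff_integrableOn_Icc_of_le ht1).mp (g_ii hgm le_rfl ht1)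
  have hcont : ContinuousOn (GG g) (Icc 0 (t+1)) := by
    refine (intervalIntegral.continuousOn_primitive hint).congr fun s hs => ?_
    rw [GG, intervalIntegral.integral_of_le hs.1]
  have hmem : Icc 0 (t+1) ∈ 𝓝[Set.Ici 0] t := by
    rw [← Set.Ici_inter_Iic]
    exact Filter.inter_mem self_mem_nhdsWithin
      (mem_nhdsWithin_of_mem_nhds (Iic_mem_nhds (by linarith)))
  exact ContinuousWithinAt.mono_of_mem_nhdsWithin (hcont t ⟨ht, by linarith⟩) hmem

def dropLast {k : ℕ} (w : EuclideanSpace ℝ (Fin (k+1))) : EuclideanSpace ℝ (Fin k) :=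
  WithLp.toLp 2 (fun j : Fin k => w j.castSucc)

def insNth {k : ℕ} (i : Fin (k+1)) (c : ℝ) (u : EuclideanSpace ℝ (Fin k)) :
    EuclideanSpace ℝ (Fin (k+1)) := WithLp.toLp 2 (Fin.insertNth (α := fun _ => ℝ) i c (WithLp.ofLp u))

lemma insNth_same {k : ℕ} (i : Fin (k+1)) (c : ℝ) (u : EuclideanSpace ℝ (Fin k)) :
    insNth i c u i = c := Fin.insertNth_apply_same (α := fun _ => ℝ) i c u

lemma insNth_succAbove {k : ℕ} (i : Fin (k+1)) (c : ℝ) (u : EuclideanSpace ℝ (Fin k)) (j : Fin k) :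
    insNth i c u (i.succAbove j) = u j := Fin.insertNth_apply_succAbove (α := fun _ => ℝ) i c u j

lemma coord_le_norm {k : ℕ} (x : EuclideanSpace ℝ (Fin k)) (i : Fin k) : |x i| ≤ ‖x‖ := by
  rw [EuclideanSpace.norm_eq, ← Real.sqrt_sq_eq_abs]
  apply Real.sqrt_le_sqrt
  have := Finset.single_le_sum (f := fun j => ‖x j‖^2)
    (fun j _ => by positivity) (Finset.mem_univ i)
  simpa [sq_abs] using this

/-- dropping the last coordinate is `1`-Lipschitz -/
lemma dropLast_lip {k : ℕ} :
    LipschitzWith 1 (dropLast (k := k)) := by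
  apply LipschitzWith.of_dist_le_mul
  intro x y
  rw [NNReal.coe_one, one_mul]; simp only [EuclideanSpace.dist_eq]
  apply Real.sqrt_le_sqrt
  rw [Fin.sum_univ_castSucc (f := fun j => dist (x j) (y j) ^ 2)]
  have h : (0:ℝ) ≤ dist (x (Fin.last k)) (y (Fin.last k)) ^ 2 := by positivity
  have : ∀ j : Fin k, dist (dropLast x j) (dropLast y j) ^ 2 = dist (x j.castSucc) (y j.castSucc) ^ 2 :=
    fun j => rfl
  simp only [this]
  linarith

/-- inserting a fixed coordinate is `1`-Lipschitz -/
lemma insertNth_lip {k : ℕ} (i : Fin (k+1)) (c : ℝ) :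
    LipschitzWith 1 (insNth i c) := by
  apply LipschitzWith.of_dist_le_mul
  intro x y
  rw [NNReal.coe_one, one_mul]; simp only [EuclideanSpace.dist_eq]
  apply Real.sqrt_le_sqrt
  rw [Fin.sum_univ_succAbove (fun j => dist (insNth i c x j) (insNth i c y j) ^ 2) i]
  have h1 : dist (insNth i c x i) (insNth i c y i) ^ 2 = 0 := by
    simp [insNth, Fin.insertNth_apply_same]
  have h2 : ∀ j : Fin k, dist (insNth i c x (i.succAbove j)) (insNth i c y (i.succAbove j)) ^ 2
      = dist (x j) (y j) ^ 2 := by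
    intro j; simp [insNth, Fin.insertNth_apply_succAbove]
  simp only [h1, h2, zero_add]
  exact le_refl _

/-- the radial projection is `2`-Lipschitz outside the unit ball -/
lemma radial_lip {E : Type*} [NormedAddCommGroup E] [NormedSpace ℝ E] :
    LipschitzOnWith 2 (fun x : E => ‖x‖⁻¹ • x) {x : E | 1 ≤ ‖x‖} := by
  rw [lipschitzOnWith_iff_dist_le_mul]
  intro x hx y hy
  simp only [Set.mem_setOf_eq] at hx hy
  have hx0 : (0:ℝ) < ‖x‖ := lt_of_lt_of_le one_pos hx
  have hy0 : (0:ℝ) < ‖y‖ := lt_of_lt_of_le one_pos hy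
  rw [dist_eq_norm, dist_eq_norm]
  have key : ‖x‖⁻¹ • x - ‖y‖⁻¹ • y = ‖x‖⁻¹ • (x - y) + (‖x‖⁻¹ - ‖y‖⁻¹) • y := by
    rw [smul_sub, sub_smul]; abel
  rw [key]
  have h1 : ‖‖x‖⁻¹ • (x - y)‖ ≤ ‖x - y‖ := by
    rw [norm_smul]
    simp only [norm_inv, norm_norm]
    calc ‖x‖⁻¹ * ‖x - y‖ ≤ 1 * ‖x - y‖ := by
          apply mul_le_mul_of_nonneg_right _ (norm_nonneg _)
          rw [inv_le_one_iff₀]; right; exact hx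
    _ = ‖x - y‖ := one_mul _
  have h2 : ‖(‖x‖⁻¹ - ‖y‖⁻¹) • y‖ ≤ ‖x - y‖ := by
    rw [norm_smul, Real.norm_eq_abs]
    have heq : ‖x‖⁻¹ - ‖y‖⁻¹ = (‖y‖ - ‖x‖) / (‖x‖ * ‖y‖) := by field_simp
    have : |‖x‖⁻¹ - ‖y‖⁻¹| = |‖y‖ - ‖x‖| / (‖x‖ * ‖y‖) := by
      rw [heq, abs_div, abs_of_pos (mul_pos hx0 hy0)]
    rw [this]
    have hxy : |‖y‖ - ‖x‖| ≤ ‖x - y‖ := by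
      rw [abs_sub_comm]
      exact abs_norm_sub_norm_le x y
    calc |‖y‖ - ‖x‖| / (‖x‖ * ‖y‖) * ‖y‖ = |‖y‖ - ‖x‖| / ‖x‖ := by field_simp
    _ ≤ ‖x - y‖ / 1 := div_le_div₀ (norm_nonneg _) hxy one_pos hx
    _ = ‖x - y‖ := div_one _
  calc ‖‖x‖⁻¹ • (x - y) + (‖x‖⁻¹ - ‖y‖⁻¹) • y‖ ≤ ‖‖x‖⁻¹ • (x - y)‖ + ‖(‖x‖⁻¹ - ‖y‖⁻¹) • y‖ :=
        norm_add_le _ _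
  _ ≤ ‖x - y‖ + ‖x - y‖ := add_le_add h1 h2
  _ = 2 * ‖x - y‖ := by ring

lemma norm_sq_eq' {k : ℕ} (x : EuclideanSpace ℝ (Fin k)) : ‖x‖^2 = ∑ j, x j ^ 2 := by
  rw [EuclideanSpace.norm_eq, Real.sq_sqrt (by positivity)]
  simp [sq_abs]

lemma haus_finite_of_bounded {k : ℕ} {s : Set (EuclideanSpace ℝ (Fin k))}
    (hs : Bornology.IsBounded s) : μH[(k:ℝ)] s < ⊤ := by
  have hk : ((k:ℝ)) = ((finrank ℝ (EuclideanSpace ℝ (Fin k)) : ℕ) : ℝ) := by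
    rw [finrank_euclideanSpace_fin]
  rw [hk]
  obtain ⟨R, hR⟩ := hs.subset_closedBall 0
  calc μH[((finrank ℝ (EuclideanSpace ℝ (Fin k)) : ℕ) : ℝ)] s
      ≤ μH[((finrank ℝ (EuclideanSpace ℝ (Fin k)) : ℕ) : ℝ)] (closedBall 0 R) :=
        measure_mono hR
  _ < ⊤ := (isCompact_closedBall _ _).measure_lt_top

lemma haus_closedBall_pos {k : ℕ} {r : ℝ} (hr : 0 < r) :
    0 < μH[(k:ℝ)] (closedBall (0 : EuclideanSpace ℝ (Fin k)) r) := by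
  have hk : ((k:ℝ)) = ((finrank ℝ (EuclideanSpace ℝ (Fin k)) : ℕ) : ℝ) := by
    rw [finrank_euclideanSpace_fin]
  rw [hk]
  exact lt_of_lt_of_le (measure_ball_pos _ _ hr) (measure_mono ball_subset_closedBall)

lemma sphere_haus_lt_top (m : ℕ) :
    μH[(m:ℝ)] (sphere (0 : EuclideanSpace ℝ (Fin (m+1))) 1) < ⊤ := by
  classical
  set R : EuclideanSpace ℝ (Fin (m+1)) → EuclideanSpace ℝ (Fin (m+1)) :=
    fun x => ‖x‖⁻¹ • x with hR
  set A : Fin (m+1) × Bool → Set (EuclideanSpace ℝ (Fin (m+1))) :=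
    fun p => (R ∘ insNth p.1 (cond p.2 1 (-1))) ''
      (closedBall (0 : EuclideanSpace ℝ (Fin m)) (m+1)) with hA
  have cover : sphere (0 : EuclideanSpace ℝ (Fin (m+1))) 1 ⊆ ⋃ p, A p := by
    intro w hw
    rw [mem_sphere_zero_iff_norm] at hw
    have hsum : ∑ j, w j ^ 2 = 1 := by
      have := norm_sq_eq' w; rw [hw] at this; simpa using this.symm
    obtain ⟨i, -, hi⟩ : ∃ i ∈ Finset.univ, (1:ℝ)/(m+1) ≤ w i ^ 2 := by
      apply Finset.exists_le_of_sum_le Finset.univ_nonempty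
      rw [hsum]
      rw [Finset.sum_const, Finset.card_univ, Fintype.card_fin, nsmul_eq_mul, mul_one_div]
      apply le_of_eq
      push_cast
      rw [div_self (by positivity)]
    have hm1 : (0:ℝ) < (m:ℝ)+1 := by positivity
    have hwi : 0 < |w i| := by
      rw [abs_pos]; intro h; rw [h] at hi; simp at hi; nlinarith
    set c := |w i| with hc
    set x := c⁻¹ • w with hx
    set u : EuclideanSpace ℝ (Fin m) := WithLp.toLp 2 (fun j => x (i.succAbove j)) with hu
    have hwine : w i ≠ 0 := fun h0 => by rw [hc, h0] at hwi; simp at hwi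
    obtain ⟨σ, hxi⟩ : ∃ σ : Bool, x i = cond σ 1 (-1) := by
      rcases le_or_gt 0 (w i) with h | h
      · refine ⟨true, ?_⟩
        show c⁻¹ * w i = 1
        rw [hc, abs_of_nonneg h, inv_mul_cancel₀ hwine]
      · refine ⟨false, ?_⟩
        show c⁻¹ * w i = -1
        rw [hc, abs_of_neg h]
        field_simp
    have hxnorm : ‖x‖ = c⁻¹ := by
      rw [hx, norm_smul, hw, mul_one, norm_inv, Real.norm_eq_abs, abs_abs]
    have hcball : u ∈ closedBall (0 : EuclideanSpace ℝ (Fin m)) (m+1) := by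
      rw [mem_closedBall_zero_iff]
      have h1 : ‖u‖^2 ≤ ‖x‖^2 := by
        rw [norm_sq_eq', norm_sq_eq']
        rw [Fin.sum_univ_succAbove (fun j => x j ^ 2) i]
        have : ∀ j, u j ^ 2 = x (i.succAbove j) ^ 2 := fun j => rfl
        simp only [this]
        nlinarith [sq_nonneg (x i)]
      have h2 : ‖x‖^2 ≤ (m:ℝ)+1 := by
        rw [hxnorm]
        rw [inv_pow]
        rw [inv_le_comm₀ (by nlinarith) hm1]
        calc ((m:ℝ)+1)⁻¹ = 1/((m:ℝ)+1) := (one_div _).symm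
        _ ≤ w i ^2 := by exact_mod_cast hi
        _ = c^2 := (sq_abs _).symm
      have : ‖u‖^2 ≤ ((m:ℝ)+1)^2 := by nlinarith
      nlinarith [norm_nonneg u, hm1]
    refine Set.mem_iUnion.2 ⟨(i, σ), ?_⟩
    rw [hA]
    refine ⟨u, hcball, ?_⟩
    have hins : insNth i (cond σ (1:ℝ) (-1)) u = x := by
      rw [← hxi]
      ext j
      refine Fin.succAboveCases i ?_ ?_ j
      · exact insNth_same i (x i) u
      · intro j'
        exact insNth_succAbove i (x i) u j'
    show (R ∘ insNth i (cond σ 1 (-1))) u = w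
    rw [Function.comp_apply, hins, hR]
    simp only [hxnorm, inv_inv]; simp only [hx, smul_smul]
    rw [mul_inv_cancel₀ (ne_of_gt hwi), one_smul]
  calc μH[(m:ℝ)] (sphere (0 : EuclideanSpace ℝ (Fin (m+1))) 1) ≤ μH[(m:ℝ)] (⋃ p, A p) :=
        measure_mono cover
  _ ≤ ∑' p, μH[(m:ℝ)] (A p) := measure_iUnion_le _
  _ = ∑ p, μH[(m:ℝ)] (A p) := tsum_fintype _
  _ < ⊤ := by
      rw [ENNReal.sum_lt_top]
      intro p _
      have hmaps : Set.MapsTo (insNth p.1 (cond p.2 1 (-1)))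
          (closedBall (0 : EuclideanSpace ℝ (Fin m)) (m+1))
          {x : EuclideanSpace ℝ (Fin (m+1)) | 1 ≤ ‖x‖} := by
        intro u _
        simp only [Set.mem_setOf_eq]
        have h1 : |insNth p.1 (cond p.2 1 (-1)) u p.1| ≤ ‖insNth p.1 (cond p.2 1 (-1)) u‖ :=
          coord_le_norm _ _
        have h2 : insNth p.1 (cond p.2 (1:ℝ) (-1)) u p.1 = cond p.2 1 (-1) :=
          insNth_same p.1 _ u
        rw [h2] at h1
        have habs : |(cond p.2 (1:ℝ) (-1))| = 1 := by cases p.2 <;> simp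
        rw [habs] at h1
        exact h1
      have hlip : LipschitzOnWith (2 * 1) (R ∘ insNth p.1 (cond p.2 1 (-1)))
          (closedBall (0 : EuclideanSpace ℝ (Fin m)) (m+1)) :=
        LipschitzOnWith.comp radial_lip
          ((insertNth_lip p.1 (cond p.2 1 (-1))).lipschitzOnWith
            (s := closedBall (0 : EuclideanSpace ℝ (Fin m)) (m+1))) hmaps
      calc μH[(m:ℝ)] (A p) ≤ ((2*1 : ℝ≥0) : ℝ≥0∞) ^ (m:ℝ) *
            μH[(m:ℝ)] (closedBall (0 : EuclideanSpace ℝ (Fin m)) (m+1)) :=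
            hlip.hausdorffMeasure_image_le (by positivity)
      _ < ⊤ := ENNReal.mul_lt_top (ENNReal.rpow_lt_top_of_nonneg (by positivity) (by simp))
          (haus_finite_of_bounded isBounded_closedBall)

lemma cap_haus_pos (m : ℕ) :
    0 < μH[(m:ℝ)] {w : EuclideanSpace ℝ (Fin (m+1)) |
      w ∈ sphere (0 : EuclideanSpace ℝ (Fin (m+1))) 1 ∧ 1/2 ≤ |w (Fin.last m)|} := by
  set cap := {w : EuclideanSpace ℝ (Fin (m+1)) |
      w ∈ sphere (0 : EuclideanSpace ℝ (Fin (m+1))) 1 ∧ 1/2 ≤ |w (Fin.last m)|} with hcap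
  have hsub : closedBall (0 : EuclideanSpace ℝ (Fin m)) (1/2) ⊆ dropLast '' cap := by
    intro u hu
    rw [mem_closedBall_zero_iff] at hu
    have husq : ‖u‖^2 ≤ 1/4 := by nlinarith [norm_nonneg u]
    set s := Real.sqrt (1 - ‖u‖^2) with hs
    have hs2 : s^2 = 1 - ‖u‖^2 := Real.sq_sqrt (by nlinarith)
    have hs12 : 1/2 ≤ s := by
      rw [hs, show (1:ℝ)/2 = Real.sqrt (1/4) by
        rw [show (1:ℝ)/4 = (1/2)^2 by norm_num, Real.sqrt_sq (by norm_num)]]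
      exact Real.sqrt_le_sqrt (by nlinarith)
    set w := insNth (Fin.last m) s u with hw
    have hwlast : w (Fin.last m) = s := insNth_same _ _ _
    have hwnorm : ‖w‖ = 1 := by
      have : ‖w‖^2 = 1 := by
        rw [norm_sq_eq']
        rw [Fin.sum_univ_succAbove (fun j => w j ^ 2) (Fin.last m)]
        have h1 : ∀ j : Fin m, w ((Fin.last m).succAbove j) = u j := fun j =>
          insNth_succAbove _ _ _ _
        simp only [hwlast, h1]
        rw [← norm_sq_eq']
        linarith [hs2]
      nlinarith [norm_nonneg w]
    refine ⟨w, ⟨?_, ?_⟩, ?_⟩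
    · rw [mem_sphere_zero_iff_norm]; exact hwnorm
    · rw [hwlast]; exact hs12.trans (le_abs_self s)
    · ext j
      show w (j.castSucc) = u j
      have : j.castSucc = (Fin.last m).succAbove j := by rw [Fin.succAbove_last]
      rw [this]
      exact insNth_succAbove _ _ _ _
  have h1 : μH[(m:ℝ)] (dropLast '' cap) ≤ ((1:ℝ≥0) : ℝ≥0∞) ^ (m:ℝ) * μH[(m:ℝ)] cap :=
    (dropLast_lip.lipschitzOnWith (s := cap)).hausdorffMeasure_image_le (by positivity)
  have h2 : (0:ℝ≥0∞) < μH[(m:ℝ)] (dropLast '' cap) :=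
    lt_of_lt_of_le (haus_closedBall_pos (by norm_num)) (measure_mono hsub)
  simp only [ENNReal.coe_one, ENNReal.one_rpow, one_mul] at h1
  exact lt_of_lt_of_le h2 h1
section MainAux
open MeasureTheory Real Filter Topology Metric Set intervalIntegral
open scoped ENNReal NNReal

variable {m : ℕ} (D : GenYoung m) (x : Euc m)

lemma geq : D.G x x = GG (D.g x x) := rfl

lemma G_contOn : ContinuousOn (D.G x x) (Set.Ici 0) := by
  rw [geq]; exact GG_contOn (D.g_mono x x)

lemma lastCoord_cont : Continuous fun w : Euc m => |lastCoord w| :=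
  continuous_abs.comp (EuclideanSpace.proj (Fin.last m)).continuous

lemma sphere_finite_meas :
    IsFiniteMeasure ((μH[(m:ℝ)] : Measure (Euc m)).restrict (sphere (0:Euc m) 1)) := by
  constructor
  rw [Measure.restrict_apply_univ]
  exact sphere_haus_lt_top m

lemma aux_integrable {ρ : ℝ} (hρ : 0 ≤ ρ) :
    IntegrableOn (fun w => D.G x x (|lastCoord w| * ρ)) (sphere (0:Euc m) 1)
      (μH[(m:ℝ)] : Measure (Euc m)) := by
  haveI := sphere_finite_meas (m := m)
  have hc : Continuous fun w : Euc m => |lastCoord w| * ρ :=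
    (lastCoord_cont).mul continuous_const
  have hmeas : AEStronglyMeasurable (fun w => D.G x x (|lastCoord w| * ρ))
      ((μH[(m:ℝ)] : Measure (Euc m)).restrict (sphere (0:Euc m) 1)) := by
    apply ContinuousOn.aestronglyMeasurable _ (isClosed_sphere.measurableSet)
    exact (G_contOn D x).comp hc.continuousOn
      (fun w _ => mul_nonneg (abs_nonneg _) hρ)
  apply Integrable.mono' (integrable_const (D.G x x ρ)) hmeas
  rw [ae_restrict_iff' isClosed_sphere.measurableSet]
  apply ae_of_all
  intro w hw
  rw [mem_sphere_zero_iff_norm] at hw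
  have h1 : |lastCoord w| ≤ 1 := by
    have := coord_le_norm w (Fin.last m); rw [hw] at this; exact this
  have harg : 0 ≤ |lastCoord w| * ρ := mul_nonneg (abs_nonneg _) hρ
  have h2 : |lastCoord w| * ρ ≤ ρ := by nlinarith [abs_nonneg (lastCoord w)]
  rw [Real.norm_eq_abs, geq D x, abs_of_nonneg (GG_nonneg (fun t ht => D.g_nonneg x x t ht) harg)]
  exact GG_mono (fun t ht => D.g_nonneg x x t ht) (D.g_mono x x) harg hρ h2

lemma sphInt_nonneg {ρ : ℝ} (hρ : 0 ≤ ρ) :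
    0 ≤ ∫ w in sphere (0:Euc m) 1, D.G x x (|lastCoord w| * ρ) ∂μH[(m:ℝ)] := by
  apply setIntegral_nonneg isClosed_sphere.measurableSet
  intro w _
  rw [geq]
  exact GG_nonneg (fun t ht => D.g_nonneg x x t ht) (mul_nonneg (abs_nonneg _) hρ)

lemma sphDensity_nonneg {ρ : ℝ} (hρ : 0 ≤ ρ) : 0 ≤ sphDensity D x ρ := by
  rw [sphDensity]
  rcases eq_or_ne ρ 0 with h | h
  · simp [h]
  · rw [if_neg h]
    exact div_nonneg (sphInt_nonneg D x hρ) hρ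

lemma sphDensity_mono : MonotoneOn (sphDensity D x) (Set.Ici 0) := by
  have hg0 : ∀ t, 0 ≤ t → 0 ≤ D.g x x t := fun t ht => D.g_nonneg x x t ht
  have hgm := D.g_mono x x
  intro a ha b hb hab
  simp only [Set.mem_Ici] at ha hb
  rcases eq_or_lt_of_le ha with h0 | h0
  · rw [sphDensity, if_pos h0.symm]
    exact sphDensity_nonneg D x hb
  rcases eq_or_lt_of_le (h0.le.trans hab) with hb0 | hb0
  · exact absurd (hb0 ▸ hab) (not_le.mpr h0)
  rw [sphDensity, sphDensity, if_neg h0.ne', if_neg hb0.ne']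
  have key : ∀ w : Euc m, D.G x x (|lastCoord w| * a) / a ≤ D.G x x (|lastCoord w| * b) / b := by
    intro w
    rcases eq_or_lt_of_le (abs_nonneg (lastCoord w)) with h | h
    · rw [← h]
      simp only [zero_mul]
      rw [geq, GG, intervalIntegral.integral_same]
      simp
    · have hslope := GG_slope hg0 hgm (mul_pos h h0)
        (by nlinarith : |lastCoord w| * a ≤ |lastCoord w| * b)
      rw [geq]
      rw [div_le_div_iff₀ h0 hb0]
      nlinarith
  rw [← MeasureTheory.integral_div, ← MeasureTheory.integral_div]
  exact setIntegral_mono_on ((aux_integrable D x h0.le).div_const a)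
    ((aux_integrable D x hb0.le).div_const b) isClosed_sphere.measurableSet
    (fun w _ => key w)

lemma sphDensity_tendsto : Tendsto (sphDensity D x) atTop atTop := by
  have hg0 : ∀ t, 0 ≤ t → 0 ≤ D.g x x t := fun t ht => D.g_nonneg x x t ht
  have hgm := D.g_mono x x
  set cap := {w : Euc m | w ∈ sphere (0:Euc m) 1 ∧ 1/2 ≤ |w (Fin.last m)|} with hcapdef
  have hcap_sub : cap ⊆ sphere (0:Euc m) 1 := fun w hw => hw.1
  have hcap_meas : MeasurableSet cap := by
    apply MeasurableSet.inter isClosed_sphere.measurableSet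
    exact (isClosed_le continuous_const (lastCoord_cont (m := m))).measurableSet
  have hcap_lt : μH[(m:ℝ)] cap < ⊤ :=
    lt_of_le_of_lt (measure_mono hcap_sub) (sphere_haus_lt_top m)
  set c0 := (μH[(m:ℝ)] cap).toReal with hc0
  have hc0pos : 0 < c0 :=
    ENNReal.toReal_pos (cap_haus_pos m).ne' hcap_lt.ne
  have lower : ∀ ρ : ℝ, 0 < ρ → D.G x x (ρ/2) * c0 / ρ ≤ sphDensity D x ρ := by
    intro ρ hρ
    rw [sphDensity, if_neg hρ.ne']
    apply div_le_div_of_nonneg_right _ hρ.le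
    calc D.G x x (ρ/2) * c0
        ≤ ∫ w in cap, D.G x x (|lastCoord w| * ρ) ∂μH[(m:ℝ)] := by
          rw [mul_comm, ← smul_eq_mul]
          apply setIntegral_ge_of_const_le hcap_meas hcap_lt.ne _
            ((aux_integrable D x hρ.le).mono_set hcap_sub)
          intro w hw
          rw [geq]
          apply GG_mono hg0 hgm (by positivity : (0:ℝ) ≤ ρ/2)
            (mul_nonneg (abs_nonneg _) hρ.le)
          have h12 : 1/2 ≤ |lastCoord w| := hw.2
          nlinarith
    _ ≤ ∫ w in sphere (0:Euc m) 1, D.G x x (|lastCoord w| * ρ) ∂μH[(m:ℝ)] := by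
          apply setIntegral_mono_set (aux_integrable D x hρ.le)
          · rw [Filter.EventuallyLE, ae_restrict_iff' isClosed_sphere.measurableSet]
            apply ae_of_all
            intro w _
            rw [geq]
            exact GG_nonneg hg0 (mul_nonneg (abs_nonneg _) hρ.le)
          · exact HasSubset.Subset.eventuallyLE hcap_sub
  have hGt : Tendsto (fun ρ : ℝ => (c0/2) * (GG (D.g x x) (ρ/2) / (ρ/2))) atTop atTop :=
    ((GG_div_tendsto hg0 hgm (D.g_top x x)).comp
      (tendsto_id.atTop_div_const two_pos)).const_mul_atTop (by positivity)
  apply tendsto_atTop_mono' atTop _ hGt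
  filter_upwards [eventually_gt_atTop 0] with ρ hρ
  calc (c0/2) * (GG (D.g x x) (ρ/2)/(ρ/2)) = D.G x x (ρ/2) * c0 / ρ := by
        rw [geq]; field_simp
  _ ≤ sphDensity D x ρ := lower ρ hρ

lemma H0_eq (t : ℝ) (ht : 0 ≤ t) :
    D.H0 x t = ∫ ρ in (0:ℝ)..t, sphDensity D x ρ := by
  rcases eq_or_lt_of_le ht with h0 | h0
  · rw [← h0, intervalIntegral.integral_same, GenYoung.H0]
    have hzero : ∀ r : ℝ,
        (∫ w in sphere (0:Euc m) 1, D.G x x (0 * |lastCoord w| * r) ∂μH[(m:ℝ)]) / r = 0 := by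
      intro r
      have : ∀ w : Euc m, D.G x x (0 * |lastCoord w| * r) = 0 := by
        intro w
        rw [zero_mul, zero_mul, geq, GG, intervalIntegral.integral_same]
      simp only [this, MeasureTheory.integral_zero, zero_div]
    simp only [hzero, intervalIntegral.integral_zero]
  · have step1 : D.H0 x t = ∫ r in (0:ℝ)..1, t * sphDensity D x (t * r) := by
      rw [GenYoung.H0]
      apply intervalIntegral.integral_congr
      intro r _
      beta_reduce
      rcases eq_or_ne r 0 with hr | hr
      · simp [hr, sphDensity]
      · have htr : t * r ≠ 0 := mul_ne_zero h0.ne' hr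
        rw [sphDensity, if_neg htr]
        have harg : ∀ w : Euc m, t * |lastCoord w| * r = |lastCoord w| * (t * r) :=
          fun w => by ring
        simp only [harg]
        field_simp [h0.ne', hr]
        congr 1; funext w; congr 1; ring
    rw [step1, intervalIntegral.integral_const_mul,
      intervalIntegral.integral_comp_mul_left (fun ρ => sphDensity D x ρ) h0.ne',
      mul_zero, mul_one, smul_eq_mul, ← mul_assoc, mul_inv_cancel₀ h0.ne', one_mul]

lemma sphDensity_ii {a b : ℝ} (ha : 0 ≤ a) (hb : 0 ≤ b) :
    IntervalIntegrable (sphDensity D x) volume a b :=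
  g_ii (sphDensity_mono D x) ha hb

lemma H0_convex : ConvexOn ℝ (Set.Ici 0) (D.H0 x) := by
  have hmono := sphDensity_mono D x
  have hF : ∀ t ∈ Set.Ici (0:ℝ), D.H0 x t = GG (sphDensity D x) t := by
    intro t ht
    exact H0_eq D x t ht
  apply convexOn_of_slope_mono_adjacent (convex_Ici 0)
  intro a b c ha hc hab hbc
  simp only [Set.mem_Ici] at ha hc
  have hb : 0 ≤ b := ha.trans hab.le
  rw [hF a ha, hF b hb, hF c hc]
  have h1 : GG (sphDensity D x) b - GG (sphDensity D x) a = ∫ s in a..b, sphDensity D x s := by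
    rw [GG_add hmono ha hab.le]; ring
  have h2 : GG (sphDensity D x) c - GG (sphDensity D x) b = ∫ s in b..c, sphDensity D x s := by
    rw [GG_add hmono hb hbc.le]; ring
  have hub : (∫ s in a..b, sphDensity D x s) ≤ (b - a) * sphDensity D x b := by
    have : (∫ s in a..b, sphDensity D x s) ≤ ∫ _ in a..b, sphDensity D x b := by
      apply intervalIntegral.integral_mono_on hab.le (sphDensity_ii D x ha hb)
        intervalIntegrable_const
      intro u hu
      exact hmono (ha.trans hu.1) hb hu.2
    simpa using this
  have hlb : (c - b) * sphDensity D x b ≤ ∫ s in b..c, sphDensity D x s := by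
    have : (∫ _ in b..c, sphDensity D x b) ≤ ∫ s in b..c, sphDensity D x s := by
      apply intervalIntegral.integral_mono_on hbc.le intervalIntegrable_const
        (sphDensity_ii D x hb (hb.trans hbc.le))
      intro u hu
      exact hmono hb (hb.trans hu.1) hu.1
    simpa using this
  rw [h1, h2, div_le_div_iff₀ (by linarith) (by linarith)]
  nlinarith

end MainAux
/-- Proposition 3.2 (first part): `h₀(x,·)` is nondecreasing on `[0,∞)` and tends
to `∞`, `H₀(x,t) = ∫₀ᵗ h₀(x,ρ) dρ`, and hence `H₀(x,·)` is convex on `[0,∞)` and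
vanishes at `0`. -/
theorem statement4 {m : ℕ} (D : GenYoung m) (C1 C2 pm pp : ℝ)
    (h1 : D.H1 C1 C2) (h3 : D.H3 pm pp) (x : Euc m) :
    MonotoneOn (sphDensity D x) (Set.Ici 0) ∧
    Tendsto (sphDensity D x) atTop atTop ∧
    (∀ t : ℝ, 0 ≤ t → D.H0 x t = ∫ ρ in (0:ℝ)..t, sphDensity D x ρ) ∧
    ConvexOn ℝ (Set.Ici 0) (D.H0 x) ∧ D.H0 x 0 = 0 := by
  refine ⟨sphDensity_mono D x, sphDensity_tendsto D x, fun t ht => H0_eq D x t ht,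
    H0_convex D x, ?_⟩
  have h := H0_eq D x 0 le_rfl
  rwa [intervalIntegral.integral_same] at h
end
end

section
/- Let G be a generalized Young function satisfying (H1) and (H3), and let u ∈ C²_c(ℝⁿ) with support contained in the ball B_R(0), R > 1. Then for every x ∈ ℝⁿ with |x| ≥ 2R and every s ∈ [1/2, 1), ∫_{ℝⁿ} G(x, x − h, |u(x) − u(x − h)| / |h|^s) |h|^{−n} dh ≤ 2^{n + p⁺} · C₂ · n·ω_n · Rⁿ · (‖u‖_∞^{p⁺} + ‖u‖_∞^{p⁻}) · |x|^{−n − 1/2}, where ω_n is the volume of the unit ball of ℝⁿ and ‖u‖_∞ is the sup norm of u. -/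
open MeasureTheory Real Filter Topology Metric Set

noncomputable section

section Aux

variable {m : ℕ}

namespace GenYoungAux

variable (D : GenYoung m) (x y : Euc m)

/-- The density extended by `0` to the left. -/
def gg : ℝ → ℝ := fun s => D.g x y (max s 0)

lemma gg_mono : Monotone (gg D x y) := fun a b hab =>
  D.g_mono x y (le_max_right a 0) (le_max_right b 0) (max_le_max hab le_rfl)

lemma gg_nonneg (s : ℝ) : 0 ≤ gg D x y s := D.g_nonneg x y _ (le_max_right s 0)

lemma gg_intble (a b : ℝ) : IntervalIntegrable (gg D x y) volume a b :=
  (gg_mono D x y).intervalIntegrable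

/-- The primitive of `gg`. -/
def FF : ℝ → ℝ := fun t => ∫ s in (0:ℝ)..t, gg D x y s

lemma FF_eq_G {t : ℝ} (ht : 0 ≤ t) : FF D x y t = D.G x y t := by
  refine intervalIntegral.integral_congr fun s hs => ?_
  rw [uIcc_of_le ht] at hs
  simp only [gg, max_eq_left hs.1]

lemma FF_cont : Continuous (FF D x y) :=
  intervalIntegral.continuous_primitive (fun a b => gg_intble D x y a b) 0

lemma FF_nonneg {t : ℝ} (ht : 0 ≤ t) : 0 ≤ FF D x y t :=
  intervalIntegral.integral_nonneg ht fun s _ => gg_nonneg D x y s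

lemma FF_pos {t : ℝ} (ht : 0 < t) : 0 < FF D x y t :=
  intervalIntegral.intervalIntegral_pos_of_pos_on (gg_intble D x y 0 t)
    (fun s hs => by
      simpa only [gg, max_eq_left hs.1.le] using D.g_pos x y s hs.1) ht

lemma FF_mono : MonotoneOn (FF D x y) (Ici 0) := by
  intro a _ b _ hab
  have h := intervalIntegral.integral_add_adjacent_intervals
    (gg_intble D x y 0 a) (gg_intble D x y a b)
  have h2 : 0 ≤ ∫ s in a..b, gg D x y s :=
    intervalIntegral.integral_nonneg hab fun s _ => gg_nonneg D x y s
  simp only [FF]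
  linarith

lemma FF_derivWithin {b : ℝ} (hb : 0 ≤ b) :
    HasDerivWithinAt (FF D x y) (gg D x y b) (Ici b) b := by
  have h0 : ContinuousWithinAt (D.g x y) (Ici b) b := D.g_rightCont x y b hb
  have hcont : ContinuousWithinAt (gg D x y) (Ioi b) b := by
    refine (ContinuousWithinAt.congr h0 (fun z hz => ?_) ?_).mono Ioi_subset_Ici_self
    · simp only [gg, max_eq_left (le_trans hb hz)]
    · simp only [gg, max_eq_left hb]
  exact intervalIntegral.integral_hasDerivWithinAt_right (s := Ici b) (t := Ioi b)
    (gg_intble D x y 0 b)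
    (((gg_mono D x y).measurable.stronglyMeasurable).stronglyMeasurableAtFilter)
    hcont

lemma key_upper {pp : ℝ} (hpp : 1 < pp)
    (hg : ∀ t : ℝ, 0 < t → t * gg D x y t ≤ pp * FF D x y t)
    {b : ℝ} (hb : 1 ≤ b) : FF D x y b ≤ FF D x y 1 * b ^ pp := by
  have hb0 : (0:ℝ) < b := lt_of_lt_of_le one_pos hb
  have main : ∀ q : ℝ, pp < q → FF D x y b ≤ FF D x y 1 * b ^ q := by
    intro q hq
    have hq1 : 1 ≤ q := le_of_lt (lt_trans hpp hq)
    have hBd : ∀ t : ℝ, HasDerivAt (fun t => FF D x y 1 * t ^ q)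
        (FF D x y 1 * (q * t ^ (q - 1))) t := fun t =>
      (Real.hasDerivAt_rpow_const (Or.inr hq1)).const_mul _
    have hfinal := image_le_of_deriv_right_lt_deriv_boundary'
      (f := FF D x y) (f' := gg D x y) (a := 1) (b := b)
      (B := fun t => FF D x y 1 * t ^ q)
      (B' := fun t => FF D x y 1 * (q * t ^ (q - 1)))
      ((FF_cont D x y).continuousOn)
      (fun t ht => FF_derivWithin D x y (by linarith [ht.1]))
      (by simp)
      (fun t _ => (hBd t).continuousAt.continuousWithinAt)
      (fun t _ => (hBd t).hasDerivWithinAt)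
      ?_ (right_mem_Icc.2 hb)
    · exact hfinal
    · intro t ht heq
      have heq' : FF D x y 1 * t ^ q = FF D x y t := heq.symm
      have ht0 : (0:ℝ) < t := lt_of_lt_of_le one_pos ht.1
      have hFt : 0 < FF D x y t := FF_pos D x y ht0
      have h1 : t * gg D x y t ≤ pp * FF D x y t := hg t ht0
      have h2 : pp * FF D x y t < q * FF D x y t :=
        mul_lt_mul_of_pos_right hq hFt
      have htq : t ^ q = t ^ (q - 1) * t := by
        rw [← Real.rpow_add_one ht0.ne' (q - 1)]; ring_nf
      have key : gg D x y t * t < FF D x y 1 * (q * t ^ (q - 1)) * t := by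
        calc gg D x y t * t = t * gg D x y t := by ring
          _ ≤ pp * FF D x y t := h1
          _ < q * FF D x y t := h2
          _ = q * (FF D x y 1 * t ^ q) := by rw [heq']
          _ = FF D x y 1 * (q * t ^ (q - 1)) * t := by rw [htq]; ring
      exact lt_of_mul_lt_mul_right key ht0.le
  have htends : Tendsto (fun q : ℝ => FF D x y 1 * b ^ q) (nhdsWithin pp (Ioi pp))
      (nhds (FF D x y 1 * b ^ pp)) :=
    (((Real.continuousAt_const_rpow hb0.ne').tendsto).const_mul _).mono_left
      nhdsWithin_le_nhds
  exact ge_of_tendsto htends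
    (eventually_mem_nhdsWithin.mono fun q hq => main q hq)

lemma key_lower {pm : ℝ} (hpm : 1 < pm)
    (hg : ∀ t : ℝ, 0 < t → pm * FF D x y t ≤ t * gg D x y t)
    {a : ℝ} (ha0 : 0 < a) (ha1 : a ≤ 1) : FF D x y a ≤ FF D x y 1 * a ^ pm := by
  have main : ∀ q : ℝ, 1 < q → q < pm → FF D x y a ≤ FF D x y 1 * a ^ q := by
    intro q hq1 hq2
    have haq : (0:ℝ) < a ^ q := Real.rpow_pos_of_pos ha0 q
    have hBd : ∀ t : ℝ, HasDerivAt (fun t => FF D x y a * a ^ (-q) * t ^ q)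
        (FF D x y a * a ^ (-q) * (q * t ^ (q - 1))) t := fun t =>
      (Real.hasDerivAt_rpow_const (Or.inr hq1.le)).const_mul _
    have hfinal := image_le_of_deriv_right_lt_deriv_boundary'
      (f := fun t => FF D x y a * a ^ (-q) * t ^ q) (f' := fun t => FF D x y a * a ^ (-q) * (q * t ^ (q - 1)))
      (a := a) (b := 1)
      (B := FF D x y) (B' := gg D x y)
      (fun t _ => (hBd t).continuousAt.continuousWithinAt)
      (fun t _ => (hBd t).hasDerivWithinAt)
      ?_ ((FF_cont D x y).continuousOn)
      (fun t ht => FF_derivWithin D x y (by linarith [ht.1]))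
      ?_ (right_mem_Icc.2 ha1)
    · have h1 : FF D x y a * a ^ (-q) * (1:ℝ) ^ q ≤ FF D x y 1 := hfinal
      rw [Real.one_rpow, mul_one] at h1
      have := mul_le_mul_of_nonneg_right h1 haq.le
      rw [mul_assoc, ← Real.rpow_add ha0, neg_add_cancel, Real.rpow_zero, mul_one] at this
      exact this
    · show FF D x y a * a ^ (-q) * a ^ q ≤ FF D x y a
      rw [mul_assoc, ← Real.rpow_add ha0, neg_add_cancel, Real.rpow_zero, mul_one]
    · intro t ht heq
      have heq' : FF D x y a * a ^ (-q) * t ^ q = FF D x y t := heq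
      have ht0 : (0:ℝ) < t := lt_of_lt_of_le ha0 ht.1
      have hFt : 0 < FF D x y t := FF_pos D x y ht0
      have h1 : pm * FF D x y t ≤ t * gg D x y t := hg t ht0
      have h2 : q * FF D x y t < pm * FF D x y t :=
        mul_lt_mul_of_pos_right hq2 hFt
      have htq : t ^ q = t ^ (q - 1) * t := by
        rw [← Real.rpow_add_one ht0.ne' (q - 1)]; ring_nf
      have key : FF D x y a * a ^ (-q) * (q * t ^ (q - 1)) * t < gg D x y t * t := by
        calc FF D x y a * a ^ (-q) * (q * t ^ (q - 1)) * t
            = q * (FF D x y a * a ^ (-q) * t ^ q) := by rw [htq]; ring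
          _ = q * FF D x y t := by rw [heq']
          _ < pm * FF D x y t := h2
          _ ≤ t * gg D x y t := h1
          _ = gg D x y t * t := by ring
      exact lt_of_mul_lt_mul_right key ht0.le
  have htends : Tendsto (fun q : ℝ => FF D x y 1 * a ^ q) (nhdsWithin pm (Iio pm))
      (nhds (FF D x y 1 * a ^ pm)) :=
    (((Real.continuousAt_const_rpow ha0.ne').tendsto).const_mul _).mono_left
      nhdsWithin_le_nhds
  refine ge_of_tendsto htends ?_
  filter_upwards [eventually_mem_nhdsWithin,
    eventually_nhdsWithin_of_eventually_nhds (eventually_gt_nhds hpm)] with q hq hq1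
  exact main q hq1 hq

end GenYoungAux

open GenYoungAux

variable {D : GenYoung m} {C2 pm pp : ℝ}

lemma G_nonneg (D : GenYoung m) (x y : Euc m) {t : ℝ} (ht : 0 ≤ t) : 0 ≤ D.G x y t := by
  rw [← FF_eq_G D x y ht]; exact FF_nonneg D x y ht

lemma G_mono (D : GenYoung m) (x y : Euc m) : MonotoneOn (D.G x y) (Ici 0) := by
  intro a ha b hb hab
  rw [← FF_eq_G D x y ha, ← FF_eq_G D x y hb]
  exact FF_mono D x y ha hb hab

lemma G_growth_bound (D : GenYoung m)
    (hC2 : ∀ x y : Euc m, D.G x y 1 ≤ C2) (hpm : 1 < pm) (hmp : pm ≤ pp)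
    (h3 : ∀ (x y : Euc m) (t : ℝ), 0 < t →
      pm ≤ t * D.g x y t / D.G x y t ∧ t * D.g x y t / D.G x y t ≤ pp)
    (x y : Euc m) {t : ℝ} (ht : 0 ≤ t) :
    D.G x y t ≤ C2 * (t ^ pp + t ^ pm) := by
  have hpp : 1 < pp := lt_of_lt_of_le hpm hmp
  have hF1 : 0 < FF D x y 1 := FF_pos D x y one_pos
  have hC2pos : 0 < C2 := lt_of_lt_of_le (by rw [← FF_eq_G D x y zero_le_one]; exact hF1) (hC2 x y)
  have hgu : ∀ s : ℝ, 0 < s → s * gg D x y s ≤ pp * FF D x y s := by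
    intro s hs
    have hFs : 0 < FF D x y s := FF_pos D x y hs
    have h := (h3 x y s hs).2
    rw [← FF_eq_G D x y hs.le] at h
    have : gg D x y s = D.g x y s := by simp [gg, max_eq_left hs.le]
    rw [this]
    exact (div_le_iff₀ hFs).1 h
  have hgl : ∀ s : ℝ, 0 < s → pm * FF D x y s ≤ s * gg D x y s := by
    intro s hs
    have hFs : 0 < FF D x y s := FF_pos D x y hs
    have h := (h3 x y s hs).1
    rw [← FF_eq_G D x y hs.le] at h
    have : gg D x y s = D.g x y s := by simp [gg, max_eq_left hs.le]
    rw [this]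
    exact (le_div_iff₀ hFs).1 h
  rcases eq_or_lt_of_le ht with h0 | h0
  · rw [← h0]
    have : D.G x y 0 = 0 := intervalIntegral.integral_same
    rw [this, Real.zero_rpow (by linarith), Real.zero_rpow (by linarith)]
    simp
  · have hGF : D.G x y t = FF D x y t := (FF_eq_G D x y ht).symm
    have hG1F : D.G x y 1 = FF D x y 1 := (FF_eq_G D x y zero_le_one).symm
    have hppn : 0 ≤ t ^ pp := Real.rpow_nonneg ht pp
    have hpmn : 0 ≤ t ^ pm := Real.rpow_nonneg ht pm
    rcases le_or_gt t 1 with h1 | h1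
    · have := key_lower D x y hpm hgl h0 h1
      rw [hGF]
      calc FF D x y t ≤ FF D x y 1 * t ^ pm := this
        _ ≤ C2 * t ^ pm := by
            apply mul_le_mul_of_nonneg_right _ hpmn
            rw [← hG1F]; exact hC2 x y
        _ ≤ C2 * (t ^ pp + t ^ pm) := by nlinarith
    · have := key_upper D x y hpp hgu h1.le
      rw [hGF]
      calc FF D x y t ≤ FF D x y 1 * t ^ pp := this
        _ ≤ C2 * t ^ pp := by
            apply mul_le_mul_of_nonneg_right _ hppn
            rw [← hG1F]; exact hC2 x y
        _ ≤ C2 * (t ^ pp + t ^ pm) := by nlinarith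

end Aux

/-- Far-field estimate: for `u ∈ C²_c(ℝⁿ)` supported in `B_R(0)`, `R > 1`, sup norm
`M`, every `|x| ≥ 2R` and `s ∈ [1/2, 1)`,
`∫_{ℝⁿ} G(x, x-h, |u(x)-u(x-h)|/|h|ˢ) |h|⁻ⁿ dh
  ≤ 2^{n+p⁺} C₂ n ωₙ Rⁿ (M^{p⁺} + M^{p⁻}) |x|^{-n-1/2}`. -/
theorem statement9 {m : ℕ} (D : GenYoung m) (C1 C2 pm pp : ℝ)
    (h1 : D.H1 C1 C2) (h3 : D.H3 pm pp) (R : ℝ) (hR : 1 < R)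
    (u : Euc m → ℝ) (hu : ContDiff ℝ 2 u) (hc : HasCompactSupport u)
    (hsupp : tsupport u ⊆ ball (0 : Euc m) R)
    (M : ℝ) (hM : IsLUB (Set.range fun x => |u x|) M)
    (x : Euc m) (hx : 2 * R ≤ ‖x‖) (s : ℝ) (hs : s ∈ Set.Ico (1/2 : ℝ) 1) :
    (∫ h : Euc m, D.G x (x - h) (|u x - u (x - h)| / ‖h‖ ^ s) / ‖h‖ ^ (m + 1))
      ≤ 2 ^ ((m + 1 : ℝ) + pp) * C2 * ((m + 1 : ℝ) * unitBallVol m) * R ^ (m + 1)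
        * (M ^ pp + M ^ pm) * ‖x‖ ^ (-(m + 1 : ℝ) - 1 / 2) := by
  obtain ⟨hC1, hC12, hH1⟩ := h1
  obtain ⟨hpm, hmp, hH3⟩ := h3
  have hC2 : ∀ a b : Euc m, D.G a b 1 ≤ C2 := fun a b => (hH1 a b).2
  have hpp : 1 < pp := lt_of_lt_of_le hpm hmp
  have hR0 : (0:ℝ) < R := by linarith
  have hx0 : (0:ℝ) < ‖x‖ := by linarith
  have hux : u x = 0 := by
    apply image_eq_zero_of_notMem_tsupport
    intro hmem
    have h2 := hsupp hmem
    rw [mem_ball, dist_zero_right] at h2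
    linarith
  have hMb : ∀ z, |u z| ≤ M := fun z => hM.1 ⟨z, rfl⟩
  have hM0 : 0 ≤ M := le_trans (abs_nonneg (u x)) (hMb x)
  have hMsum : 0 ≤ M ^ pp + M ^ pm :=
    add_nonneg (Real.rpow_nonneg hM0 _) (Real.rpow_nonneg hM0 _)
  have hC2pos : 0 < C2 := by linarith
  set K : ℝ := C2 * (M ^ pp + M ^ pm) * (‖x‖ / 2) ^ (-(m + 1 : ℝ) - 1 / 2) with hKdef
  have hx2 : (0:ℝ) < ‖x‖ / 2 := by linarith
  have hnonneg : ∀ h : Euc m,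
      0 ≤ D.G x (x - h) (|u x - u (x - h)| / ‖h‖ ^ s) / ‖h‖ ^ (m + 1) := by
    intro h
    apply div_nonneg _ (pow_nonneg (norm_nonneg h) _)
    exact G_nonneg D x (x - h) (div_nonneg (abs_nonneg _) (Real.rpow_nonneg (norm_nonneg h) s))
  have hbound : ∀ h : Euc m,
      D.G x (x - h) (|u x - u (x - h)| / ‖h‖ ^ s) / ‖h‖ ^ (m + 1)
        ≤ Set.indicator (ball x R) (fun _ => K) h := by
    intro h
    by_cases hmem : h ∈ ball x R
    · rw [Set.indicator_of_mem hmem]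
      have hd : ‖x - h‖ < R := by
        have := mem_ball.1 hmem
        rwa [dist_eq_norm, norm_sub_rev] at this
      have hxh : ‖x‖ / 2 ≤ ‖h‖ := by
        have h2 : ‖x‖ ≤ ‖x - h‖ + ‖h‖ := by
          calc ‖x‖ = ‖(x - h) + h‖ := by rw [sub_add_cancel]
            _ ≤ ‖x - h‖ + ‖h‖ := norm_add_le _ _
        linarith
      have hh1 : 1 < ‖h‖ := by linarith
      have hh0 : (0:ℝ) < ‖h‖ := by linarith
      have hhs : (0:ℝ) < ‖h‖ ^ s := Real.rpow_pos_of_pos hh0 s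
      have ht0 : 0 ≤ |u x - u (x - h)| / ‖h‖ ^ s := div_nonneg (abs_nonneg _) hhs.le
      have hτ1 : |u x - u (x - h)| / ‖h‖ ^ s ≤ M / ‖h‖ ^ s := by
        gcongr
        rw [hux, zero_sub, abs_neg]
        exact hMb _
      have hτ0 : 0 ≤ M / ‖h‖ ^ s := div_nonneg hM0 hhs.le
      have hG1 : D.G x (x - h) (|u x - u (x - h)| / ‖h‖ ^ s) ≤ D.G x (x - h) (M / ‖h‖ ^ s) :=
        G_mono D x (x - h) ht0 hτ0 hτ1
      have hG2 : D.G x (x - h) (M / ‖h‖ ^ s) ≤ C2 * ((M / ‖h‖ ^ s) ^ pp + (M / ‖h‖ ^ s) ^ pm) :=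
        G_growth_bound D hC2 hpm hmp hH3 x (x - h) hτ0
      have hτp : ∀ p : ℝ, 1 ≤ p → (M / ‖h‖ ^ s) ^ p ≤ M ^ p * ‖h‖ ^ (-(1:ℝ)/2) := by
        intro p hp
        have heq : (M / ‖h‖ ^ s) ^ p = M ^ p * ‖h‖ ^ (-(s * p)) := by
          rw [Real.div_rpow hM0 hhs.le, ← Real.rpow_mul hh0.le, div_eq_mul_inv,
            ← Real.rpow_neg hh0.le]
        rw [heq]
        apply mul_le_mul_of_nonneg_left _ (Real.rpow_nonneg hM0 p)
        apply Real.rpow_le_rpow_of_exponent_le hh1.le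
        nlinarith [hs.1, mul_nonneg (by linarith [hs.1] : (0:ℝ) ≤ s) (by linarith : (0:ℝ) ≤ p - 1)]
      have hGfinal : D.G x (x - h) (|u x - u (x - h)| / ‖h‖ ^ s)
          ≤ C2 * (M ^ pp + M ^ pm) * ‖h‖ ^ (-(1:ℝ)/2) := by
        calc D.G x (x - h) (|u x - u (x - h)| / ‖h‖ ^ s)
            ≤ C2 * ((M / ‖h‖ ^ s) ^ pp + (M / ‖h‖ ^ s) ^ pm) := le_trans hG1 hG2
          _ ≤ C2 * (M ^ pp * ‖h‖ ^ (-(1:ℝ)/2) + M ^ pm * ‖h‖ ^ (-(1:ℝ)/2)) := by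
              apply mul_le_mul_of_nonneg_left _ hC2pos.le
              exact add_le_add (hτp pp hpp.le) (hτp pm hpm.le)
          _ = C2 * (M ^ pp + M ^ pm) * ‖h‖ ^ (-(1:ℝ)/2) := by ring
      have hcast : (‖h‖:ℝ) ^ (m + 1) = ‖h‖ ^ ((m + 1 : ℕ) : ℝ) := (Real.rpow_natCast _ _).symm
      calc D.G x (x - h) (|u x - u (x - h)| / ‖h‖ ^ s) / ‖h‖ ^ (m + 1)
          ≤ C2 * (M ^ pp + M ^ pm) * ‖h‖ ^ (-(1:ℝ)/2) / ‖h‖ ^ (m + 1) := by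
            gcongr
          _ = C2 * (M ^ pp + M ^ pm) * ‖h‖ ^ (-(m + 1 : ℝ) - 1/2) := by
            rw [hcast, mul_div_assoc, ← Real.rpow_sub hh0]
            congr 2
            push_cast
            ring
          _ ≤ K := by
            rw [hKdef]
            apply mul_le_mul_of_nonneg_left _ (mul_nonneg hC2pos.le hMsum)
            apply Real.rpow_le_rpow_of_nonpos hx2 hxh
            have hm : (0:ℝ) ≤ (m : ℝ) := Nat.cast_nonneg m
            linarith
    · rw [Set.indicator_of_notMem hmem]
      have hzero : u (x - h) = 0 := by
        apply image_eq_zero_of_notMem_tsupport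
        intro hmem2
        have h2 := hsupp hmem2
        rw [mem_ball, dist_zero_right] at h2
        apply hmem
        rw [mem_ball, dist_eq_norm, norm_sub_rev]
        exact h2
      rw [hux, hzero, sub_zero, abs_zero, zero_div]
      have hG0 : D.G x (x - h) 0 = 0 := intervalIntegral.integral_same
      rw [hG0, zero_div]
  have hint : Integrable (Set.indicator (ball x R) fun _ => K) volume := by
    rw [integrable_indicator_iff measurableSet_ball]
    exact integrableOn_const measure_ball_lt_top.ne
  have hIle : (∫ h : Euc m, D.G x (x - h) (|u x - u (x - h)| / ‖h‖ ^ s) / ‖h‖ ^ (m + 1))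
      ≤ ∫ h : Euc m, Set.indicator (ball x R) (fun _ => K) h :=
    integral_mono_of_nonneg (Filter.Eventually.of_forall hnonneg) hint
      (Filter.Eventually.of_forall hbound)
  have hIval : (∫ h : Euc m, Set.indicator (ball x R) (fun _ => K) h)
      = (volume (ball x R)).toReal * K := by
    rw [integral_indicator_const _ measurableSet_ball, smul_eq_mul]
    rfl
  have hvol : (volume (ball x R)).toReal = R ^ (m + 1) * unitBallVol m := by
    rw [Measure.addHaar_ball volume x hR0.le, finrank_euclideanSpace_fin,
      ENNReal.toReal_mul, ENNReal.toReal_ofReal (by positivity)]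
    rfl
  have homega : 0 ≤ unitBallVol m := ENNReal.toReal_nonneg
  have hxz : 0 ≤ ‖x‖ ^ (-(m + 1 : ℝ) - 1 / 2) := Real.rpow_nonneg (norm_nonneg x) _
  have hsplit : (‖x‖ / 2) ^ (-(m + 1 : ℝ) - 1 / 2)
      = ‖x‖ ^ (-(m + 1 : ℝ) - 1 / 2) * 2 ^ ((m + 1 : ℝ) + 1 / 2) := by
    rw [Real.div_rpow (norm_nonneg x) (by norm_num : (0:ℝ) ≤ 2), div_eq_mul_inv,
      ← Real.rpow_neg (by norm_num : (0:ℝ) ≤ 2)]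
    congr 2
    ring
  have h2le : (2:ℝ) ^ ((m + 1 : ℝ) + 1 / 2) ≤ 2 ^ ((m + 1 : ℝ) + pp) * (m + 1 : ℝ) := by
    have ha : (2:ℝ) ^ ((m + 1 : ℝ) + 1 / 2) ≤ 2 ^ ((m + 1 : ℝ) + pp) :=
      Real.rpow_le_rpow_of_exponent_le one_le_two (by linarith)
    have hb : (1:ℝ) ≤ (m + 1 : ℝ) := by
      have : (0:ℝ) ≤ (m : ℝ) := Nat.cast_nonneg m
      linarith
    nlinarith [Real.rpow_pos_of_pos (by norm_num : (0:ℝ) < 2) ((m + 1 : ℝ) + pp)]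
  have hprodn : 0 ≤ C2 * (M ^ pp + M ^ pm) * ‖x‖ ^ (-(m + 1 : ℝ) - 1 / 2)
      * R ^ (m + 1) * unitBallVol m :=
    mul_nonneg (mul_nonneg (mul_nonneg (mul_nonneg hC2pos.le hMsum) hxz)
      (pow_nonneg hR0.le _)) homega
  calc (∫ h : Euc m, D.G x (x - h) (|u x - u (x - h)| / ‖h‖ ^ s) / ‖h‖ ^ (m + 1))
      ≤ (volume (ball x R)).toReal * K := le_trans hIle (le_of_eq hIval)
    _ = (2:ℝ) ^ ((m + 1 : ℝ) + 1/2) * (C2 * (M ^ pp + M ^ pm)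
          * ‖x‖ ^ (-(m + 1 : ℝ) - 1 / 2) * R ^ (m + 1) * unitBallVol m) := by
        rw [hvol, hKdef, hsplit]; ring
    _ ≤ ((2:ℝ) ^ ((m + 1 : ℝ) + pp) * (m + 1 : ℝ)) * (C2 * (M ^ pp + M ^ pm)
          * ‖x‖ ^ (-(m + 1 : ℝ) - 1 / 2) * R ^ (m + 1) * unitBallVol m) :=
        mul_le_mul_of_nonneg_right h2le hprodn
    _ = 2 ^ ((m + 1 : ℝ) + pp) * C2 * ((m + 1 : ℝ) * unitBallVol m) * R ^ (m + 1)
        * (M ^ pp + M ^ pm) * ‖x‖ ^ (-(m + 1 : ℝ) - 1 / 2) := by ring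
end
end
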